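/- The free band on a finite type is finite. Equivalently, every band (idempotent semigroup) that is generated, as a semigroup, by a finite subset is finite. -/

import Mathlib

/-- The smallest multiplicative congruence on the free semigroup on `α`
identifying `w * w` with `w` for every element `w`. -/
def bandCon (α : Type*) : Con (FreeSemigroup α) :=
  conGen fun u v => u = v * v

/-- The free band on `α`: the quotient of the free semigroup on `α` by the
smallest multiplicative congruence identifying `w * w` with `w`. -/
abbrev FreeBand (α : Type*) := (bandCon α).Quotient



namespace GreenRees

section FB

variable {α : Type*}

/-- The projection from the free semigroup to the free band. -/
def pi (w : FreeSemigroup α) : FreeBand α := (w : (bandCon α).Quotient)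

theorem pi_mul (u v : FreeSemigroup α) : pi (u * v) = pi u * pi v :=
  Con.coe_mul u v

theorem pi_surjective : Function.Surjective (pi (α := α)) :=
  fun x => Con.induction_on x fun w => ⟨w, rfl⟩

/-- The free band is a band: every element is idempotent. -/
theorem fb_idem (x : FreeBand α) : x * x = x := by
  refine Con.induction_on x fun w => ?_
  have h : (bandCon α) (w * w) w := ConGen.Rel.of _ _ rfl
  have := (Con.eq (c := bandCon α)).2 h
  calc (w : FreeBand α) * (w : FreeBand α) = ((w * w : FreeSemigroup α) : FreeBand α) :=
        (Con.coe_mul _ _).symm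
    _ = (w : FreeBand α) := this

/-- The content (set of letters) of a word. -/
def content [DecidableEq α] (w : FreeSemigroup α) : Finset α :=
  insert w.1 w.2.toFinset

theorem content_of [DecidableEq α] (a : α) : content (FreeSemigroup.of a) = {a} := rfl

theorem content_mk [DecidableEq α] (h : α) (t : List α) :
    content (FreeSemigroup.mk h t) = (h :: t).toFinset := by
  simp [content, List.toFinset_cons]

theorem content_mul [DecidableEq α] (u v : FreeSemigroup α) :
    content (u * v) = content u ∪ content v := by
  obtain ⟨a, l⟩ := u
  obtain ⟨b, m⟩ := v
  show content (FreeSemigroup.mk a (l ++ b :: m)) = _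
  simp [content_mk, content, List.toFinset_append, List.toFinset_cons]
  ext x
  simp
  tauto

theorem content_nonempty [DecidableEq α] (w : FreeSemigroup α) : (content w).Nonempty :=
  ⟨w.1, Finset.mem_insert_self _ _⟩

end FB

end GreenRees

namespace GreenRees

section Band

variable {M : Type*} [Semigroup M]

theorem band_sand_right (idem : ∀ a : M, a * a = a) {x y z : M}
    (hxy : x * y * x = x) :
    x * (z * (y * (z * (x * z)))) = x * z := by
  calc (x * (z * (y * (z * (x * z)))) : M)
    _ = (x * z) * (y * (z * (x * z))) := by simp only [mul_assoc]
    _ = (x * z) * (x * z) * (y * (z * (x * z))) := (by rw [idem (x * z)] : ((x * z) * (x * z) * (y * (z * (x * z))) : M) = (x * z) * (y * (z * (x * z)))).symm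
    _ = x * z * (x) * (z * (y * (z * (x * z)))) := by simp only [mul_assoc]
    _ = x * z * ((x * y * x)) * (z * (y * (z * (x * z)))) := (by rw [hxy] : (x * z * ((x * y * x)) * (z * (y * (z * (x * z)))) : M) = x * z * (x) * (z * (y * (z * (x * z))))).symm
    _ = x * ((z * x * y)) * (x * (z * (y * (z * (x * z))))) := by simp only [mul_assoc]
    _ = x * ((z * x * y) * (z * x * y)) * (x * (z * (y * (z * (x * z))))) := (by rw [idem (z * x * y)] : (x * ((z * x * y) * (z * x * y)) * (x * (z * (y * (z * (x * z))))) : M) = x * ((z * x * y)) * (x * (z * (y * (z * (x * z)))))).symm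
    _ = x * (z * (x * (y * z))) * ((x * y * x)) * (z * (y * (z * (x * z)))) := by simp only [mul_assoc]
    _ = x * (z * (x * (y * z))) * (x) * (z * (y * (z * (x * z)))) := by rw [hxy]
    _ = x * (z * x) * ((y * z * x * z) * (y * z * x * z)) := by simp only [mul_assoc]
    _ = x * (z * x) * ((y * z * x * z)) := by rw [idem (y * z * x * z)]
    _ = x * (z * (x * (y * z))) * (x) * (z) := by simp only [mul_assoc]
    _ = x * (z * (x * (y * z))) * ((x * y * x)) * (z) := (by rw [hxy] : (x * (z * (x * (y * z))) * ((x * y * x)) * (z) : M) = x * (z * (x * (y * z))) * (x) * (z)).symm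
    _ = x * ((z * x * y) * (z * x * y)) * (x * z) := by simp only [mul_assoc]
    _ = x * ((z * x * y)) * (x * z) := by rw [idem (z * x * y)]
    _ = x * z * ((x * y * x)) * (z) := by simp only [mul_assoc]
    _ = x * z * (x) * (z) := by rw [hxy]
    _ = (x * z) * (x * z) := by simp only [mul_assoc]
    _ = (x * z) := by rw [idem (x * z)]
    _ = x * z := by simp only [mul_assoc]

theorem band_sand_left (idem : ∀ a : M, a * a = a) {x y z : M}
    (hxy : x * y * x = x) :
    z * (x * (z * (y * (z * x)))) = z * x := by
  calc (z * (x * (z * (y * (z * x)))) : M)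
    _ = z * (x * (z * y)) * ((z * x)) := by simp only [mul_assoc]
    _ = z * (x * (z * y)) * ((z * x) * (z * x)) := (by rw [idem (z * x)] : (z * (x * (z * y)) * ((z * x) * (z * x)) : M) = z * (x * (z * y)) * ((z * x))).symm
    _ = z * (x) * (z * (y * (z * (x * (z * x))))) := by simp only [mul_assoc]
    _ = z * ((x * y * x)) * (z * (y * (z * (x * (z * x))))) := (by rw [hxy] : (z * ((x * y * x)) * (z * (y * (z * (x * (z * x))))) : M) = z * (x) * (z * (y * (z * (x * (z * x)))))).symm
    _ = (z * x * y) * (x * (z * (y * (z * (x * (z * x)))))) := by simp only [mul_assoc]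
    _ = (z * x * y) * (z * x * y) * (x * (z * (y * (z * (x * (z * x)))))) := (by rw [idem (z * x * y)] : ((z * x * y) * (z * x * y) * (x * (z * (y * (z * (x * (z * x)))))) : M) = (z * x * y) * (x * (z * (y * (z * (x * (z * x))))))).symm
    _ = z * (x * (y * z)) * ((x * y * x)) * (z * (y * (z * (x * (z * x))))) := by simp only [mul_assoc]
    _ = z * (x * (y * z)) * (x) * (z * (y * (z * (x * (z * x))))) := by rw [hxy]
    _ = z * x * ((y * z * x * z) * (y * z * x * z)) * (x) := by simp only [mul_assoc]
    _ = z * x * ((y * z * x * z)) * (x) := by rw [idem (y * z * x * z)]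
    _ = z * (x * y) * ((z * x) * (z * x)) := by simp only [mul_assoc]
    _ = z * (x * y) * ((z * x)) := by rw [idem (z * x)]
    _ = z * (x * (y * z)) * (x) := by simp only [mul_assoc]
    _ = z * (x * (y * z)) * ((x * y * x)) := (by rw [hxy] : (z * (x * (y * z)) * ((x * y * x)) : M) = z * (x * (y * z)) * (x)).symm
    _ = (z * x * y) * (z * x * y) * (x) := by simp only [mul_assoc]
    _ = (z * x * y) * (x) := by rw [idem (z * x * y)]
    _ = z * ((x * y * x)) := by simp only [mul_assoc]
    _ = z * (x) := by rw [hxy]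
    _ = z * x := by simp only [mul_assoc]

theorem band_trans (idem : ∀ a : M, a * a = a) {a b c : M}
    (hab : a * b * a = a) (hbc : b * c * b = b) :
    a * (c * a) = a := by
  calc (a * (c * a) : M)
    _ = a * (c * a) := by simp only [mul_assoc]
    _ = (a * b * a) * (c * a) := (by rw [hab] : ((a * b * a) * (c * a) : M) = a * (c * a)).symm
    _ = a * (b * (a * c)) * (a) := by simp only [mul_assoc]
    _ = a * (b * (a * c)) * ((a * b * a)) := (by rw [hab] : (a * (b * (a * c)) * ((a * b * a)) : M) = a * (b * (a * c)) * (a)).symm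
    _ = a * (b) * (a * (c * (a * (b * a)))) := by simp only [mul_assoc]
    _ = a * ((b * c * b)) * (a * (c * (a * (b * a)))) := (by rw [hbc] : (a * ((b * c * b)) * (a * (c * (a * (b * a)))) : M) = a * (b) * (a * (c * (a * (b * a))))).symm
    _ = (a * b * c) * (b * (a * (c * (a * (b * a))))) := by simp only [mul_assoc]
    _ = (a * b * c) * (a * b * c) * (b * (a * (c * (a * (b * a))))) := (by rw [idem (a * b * c)] : ((a * b * c) * (a * b * c) * (b * (a * (c * (a * (b * a))))) : M) = (a * b * c) * (b * (a * (c * (a * (b * a)))))).symm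
    _ = a * (b * (c * (a * (b * (c * (b * (a * (c * a)))))))) * (b) * (a) := by simp only [mul_assoc]
    _ = a * (b * (c * (a * (b * (c * (b * (a * (c * a)))))))) * ((b * c * b)) * (a) := (by rw [hbc] : (a * (b * (c * (a * (b * (c * (b * (a * (c * a)))))))) * ((b * c * b)) * (a) : M) = a * (b * (c * (a * (b * (c * (b * (a * (c * a)))))))) * (b) * (a)).symm
    _ = a * b * ((c * a * b * c * b * a) * (c * a * b * c * b * a)) := by simp only [mul_assoc]
    _ = a * b * ((c * a * b * c * b * a)) := by rw [idem (c * a * b * c * b * a)]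
    _ = (a * b * c) * (a * b * c) * (b * a) := by simp only [mul_assoc]
    _ = (a * b * c) * (b * a) := by rw [idem (a * b * c)]
    _ = a * ((b * c * b)) * (a) := by simp only [mul_assoc]
    _ = a * (b) * (a) := by rw [hbc]
    _ = (a * b * a) := by simp only [mul_assoc]
    _ = a := by rw [hab]

theorem band_comm_sand (idem : ∀ a : M, a * a = a) (x y : M) :
    x * y * (y * x) * (x * y) = x * y := by
  calc x * y * (y * x) * (x * y)
    _ = x * (y * y) * (x * x) * y := by simp only [mul_assoc]
    _ = x * y * (x * x) * y := by rw [idem y]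
    _ = x * y * x * y := by rw [idem x]
    _ = (x * y) * (x * y) := by simp only [mul_assoc]
    _ = x * y := idem _
end Band

end GreenRees

namespace GreenRees

section Eta

variable {α : Type*}

/-- McLean's relation: the kernel of the largest semilattice quotient of a band. -/
def etaRel (x y : FreeBand α) : Prop := x * y * x = x ∧ y * x * y = y

theorem etaRel_refl (x : FreeBand α) : etaRel x x :=
  ⟨by rw [fb_idem x, fb_idem x], by rw [fb_idem x, fb_idem x]⟩

theorem etaRel_symm {x y : FreeBand α} (h : etaRel x y) : etaRel y x := ⟨h.2, h.1⟩

theorem etaRel_trans {x y z : FreeBand α} (h1 : etaRel x y) (h2 : etaRel y z) :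
    etaRel x z := by
  constructor
  · have := band_trans fb_idem h1.1 h2.1
    calc x * z * x = x * (z * x) := by rw [mul_assoc]
      _ = x := this
  · have := band_trans fb_idem h2.2 h1.2
    calc z * x * z = z * (x * z) := by rw [mul_assoc]
      _ = z := this

theorem etaRel_mul_right {x y : FreeBand α} (h : etaRel x y) (z : FreeBand α) :
    etaRel (x * z) (y * z) := by
  constructor
  · have := band_sand_right fb_idem h.1 (z := z)
    calc x * z * (y * z) * (x * z) = x * (z * (y * (z * (x * z)))) := by
          simp only [mul_assoc]
      _ = x * z := this
  · have := band_sand_right fb_idem h.2 (z := z)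
    calc y * z * (x * z) * (y * z) = y * (z * (x * (z * (y * z)))) := by
          simp only [mul_assoc]
      _ = y * z := this

theorem etaRel_mul_left {x y : FreeBand α} (h : etaRel x y) (z : FreeBand α) :
    etaRel (z * x) (z * y) := by
  constructor
  · have := band_sand_left fb_idem h.1 (z := z)
    calc z * x * (z * y) * (z * x) = z * (x * (z * (y * (z * x)))) := by
          simp only [mul_assoc]
      _ = z * x := this
  · have := band_sand_left fb_idem h.2 (z := z)
    calc z * y * (z * x) * (z * y) = z * (y * (z * (x * (z * y)))) := by
          simp only [mul_assoc]
      _ = z * y := this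

/-- McLean's relation as a multiplicative congruence on the free band. -/
def eta (α : Type*) : Con (FreeBand α) where
  r := etaRel
  iseqv := ⟨etaRel_refl, etaRel_symm, etaRel_trans⟩
  mul' := fun {w x y z} h1 h2 =>
    etaRel_trans (etaRel_mul_right h1 y) (etaRel_mul_left h2 x)

theorem eta_comm (X Y : (eta α).Quotient) : X * Y = Y * X := by
  refine Con.induction_on₂ X Y fun x y => ?_
  rw [← Con.coe_mul, ← Con.coe_mul]
  exact (Con.eq (eta α)).2 ⟨band_comm_sand fb_idem x y, band_comm_sand fb_idem y x⟩

/-- The composite projection to the semilattice quotient. -/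
def G (w : FreeSemigroup α) : (eta α).Quotient := ((pi w : FreeBand α) : (eta α).Quotient)

theorem G_mul (u v : FreeSemigroup α) : G (u * v) = G u * G v := by
  unfold G
  rw [pi_mul, Con.coe_mul]

theorem G_idem (w : FreeSemigroup α) : G w * G w = G w := by
  unfold G
  rw [← Con.coe_mul, fb_idem]

end Eta

end GreenRees

namespace GreenRees

section Absorb

variable {α : Type*} [DecidableEq α]

theorem letter_abs : ∀ (v : FreeSemigroup α) (a : α), a ∈ content v →
    G v * G (FreeSemigroup.of a) = G v := by
  intro v
  induction v using FreeSemigroup.recOnMul with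
  | ih1 b =>
      intro a ha
      rw [content_of, Finset.mem_singleton] at ha
      subst ha
      exact G_idem _
  | ih2 b v' _ ih' =>
      intro a ha
      rw [content_mul, Finset.mem_union] at ha
      rw [G_mul]
      rcases ha with hb | hv
      · rw [content_of, Finset.mem_singleton] at hb
        subst hb
        rw [mul_assoc, eta_comm (G v') (G (FreeSemigroup.of a)), ← mul_assoc,
          G_idem]
      · rw [mul_assoc, ih' a hv]

theorem content_abs : ∀ (u v : FreeSemigroup α), content u ⊆ content v →
    G v * G u = G v := by
  intro u
  induction u using FreeSemigroup.recOnMul with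
  | ih1 a =>
      intro v h
      exact letter_abs v a (h (by rw [content_of]; exact Finset.mem_singleton_self a))
  | ih2 a u' iha ih' =>
      intro v h
      rw [content_mul] at h
      rw [G_mul, ← mul_assoc, iha v (Finset.union_subset_iff.1 h).1,
        ih' v (Finset.union_subset_iff.1 h).2]

theorem G_content (u v : FreeSemigroup α) (h : content u = content v) : G u = G v := by
  have h1 : G u * G v = G u := content_abs v u h.ge
  have h2 : G v * G u = G v := content_abs u v h.le
  rw [← h1, eta_comm, h2]

/-- The key sandwich lemma: words with equal content absorb each other. -/
theorem sandwich_eq (u v : FreeSemigroup α) (h : content u = content v) :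
    pi u * pi v * pi u = pi u := by
  have : ((pi u : FreeBand α) : (eta α).Quotient) = ((pi v : FreeBand α) : (eta α).Quotient) :=
    G_content u v h
  exact ((Con.eq (eta α)).1 this).1

/-- Sandwich absorption for a word of smaller content. -/
theorem sandwich_sub (u v : FreeSemigroup α) (h : content v ⊆ content u) :
    pi u * pi v * pi u = pi u := by
  have hc : content (v * u) = content u := by
    rw [content_mul, Finset.union_eq_right.2 h]
  have h1 := sandwich_eq u (v * u) (hc.symm)
  rw [pi_mul] at h1
  calc pi u * pi v * pi u = pi u * pi v * (pi u * pi u) := by rw [fb_idem]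
    _ = pi u * (pi v * pi u) * pi u := by simp only [mul_assoc]
    _ = pi u := h1

end Absorb

end GreenRees

namespace GreenRees

section ListDec

variable {α : Type*} [DecidableEq α]

/-- Every list whose content has at least two letters splits as `p ++ σ :: s` where
`σ` is the last new letter and `p` contains every other letter. -/
theorem list_dec : ∀ (n : ℕ) (l : List α), l.length ≤ n → 2 ≤ l.toFinset.card →
    ∃ p σ s, l = p ++ σ :: s ∧ σ ∉ p ∧ p.toFinset = l.toFinset.erase σ ∧ p ≠ [] := by
  intro n
  induction n with
  | zero =>
      intro l hl hc
      rw [Nat.le_zero, List.length_eq_zero_iff] at hl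
      subst hl
      simp at hc
  | succ n ih =>
      rintro (_ | ⟨x, t⟩) hl hc
      · simp at hc
      · by_cases h2 : 2 ≤ t.toFinset.card
        · have hlt : t.length ≤ n := by
            simp only [List.length_cons] at hl
            omega
          obtain ⟨p', σ', s', ht, hσ'p, hp'c, hp'ne⟩ := ih t hlt h2
          have hσ't : σ' ∈ t.toFinset := by
            rw [ht]
            simp
          by_cases hx : x = σ'
          · -- recurse on the shorter list x :: p'
            have hxp'fin : (x :: p').toFinset = t.toFinset := by
              rw [List.toFinset_cons, hp'c, hx, Finset.insert_erase hσ't]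
            have hlen : (x :: p').length ≤ n := by
              have : p'.length + 1 ≤ t.length := by
                rw [ht]
                simp only [List.length_append, List.length_cons]
                omega
              simp only [List.length_cons] at hl ⊢
              omega
            have hcard2 : 2 ≤ (x :: p').toFinset.card := by
              rw [hxp'fin]; exact h2
            obtain ⟨P, sg, S, hsplit, hSgP, hPc, hPne⟩ := ih (x :: p') hlen hcard2
            refine ⟨P, sg, S ++ σ' :: s', ?_, hSgP, ?_, hPne⟩
            · have : x :: t = (x :: p') ++ σ' :: s' := by rw [ht]; rfl
              rw [this, hsplit, List.append_assoc, List.cons_append]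
            · have hfin : (x :: t).toFinset = t.toFinset := by
                rw [List.toFinset_cons, hx, Finset.insert_eq_self.2 hσ't]
              rw [hPc, hxp'fin, hfin]
          · refine ⟨x :: p', σ', s', ?_, ?_, ?_, by simp⟩
            · rw [ht]; rfl
            · simp only [List.mem_cons, not_or]
              exact ⟨fun h => hx h.symm, hσ'p⟩
            · rw [List.toFinset_cons, hp'c, List.toFinset_cons]
              exact (Finset.erase_insert_of_ne (fun h : x = σ' => hx h)).symm
        · -- t has exactly one letter, and `x` is fresh
          push_neg at h2
          have hxt : x ∉ t.toFinset := by
            intro hmem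
            have : (x :: t).toFinset = t.toFinset := by
              rw [List.toFinset_cons, Finset.insert_eq_self.2 hmem]
            rw [this] at hc
            omega
          have hc1 : t.toFinset.card = 1 := by
            have hle : (x :: t).toFinset.card ≤ t.toFinset.card + 1 := by
              rw [List.toFinset_cons]
              exact Finset.card_insert_le _ _
            omega
          obtain ⟨y, hy⟩ := Finset.card_eq_one.1 hc1
          obtain (_ | ⟨y₀, t'⟩) := t
          · simp at hc1
          · have hy₀ : y₀ ∈ (y₀ :: t').toFinset := by simp
            have hy₀y : y₀ = y := by
              rw [hy, Finset.mem_singleton] at hy₀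
              exact hy₀
            refine ⟨[x], y₀, t', rfl, ?_, ?_, by simp⟩
            · simp only [List.mem_cons, List.not_mem_nil, or_false]
              intro h
              exact hxt (h ▸ hy₀)
            · subst hy₀y
              have hxy : x ≠ y₀ := fun h => hxt (by rw [hy]; exact h ▸ Finset.mem_singleton_self y₀)
              rw [show (x :: y₀ :: t').toFinset = insert x ((y₀ :: t').toFinset) from
                List.toFinset_cons, hy, Finset.erase_insert_of_ne hxy, Finset.erase_singleton]
              simp

end ListDec

end GreenRees

namespace GreenRees

section WordDec

variable {α : Type*} [DecidableEq α]

theorem of_eq_mk (b : α) : FreeSemigroup.of b = FreeSemigroup.mk b [] := rfl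

theorem of_mul_mk (b : α) (c : α) (m : List α) :
    FreeSemigroup.of b * FreeSemigroup.mk c m = FreeSemigroup.mk b (c :: m) := by
  rw [of_eq_mk, FreeSemigroup.mk_mul_mk]
  rfl

/-- Left decomposition: `w` is absorbed on the left by its initial mark `p·σ`. -/
theorem left_dec (w : FreeSemigroup α) (hc : 2 ≤ (content w).card) :
    ∃ (p : FreeSemigroup α) (σ : α), σ ∈ content w ∧
      content p = (content w).erase σ ∧
      content (p * FreeSemigroup.of σ) = content w ∧
      (pi p * pi (FreeSemigroup.of σ)) * pi w = pi w := by
  obtain ⟨h, t⟩ := w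
  rw [content_mk] at hc ⊢
  obtain ⟨p, σ, s, hsplit, hσp, hpc, hpne⟩ :=
    list_dec (h :: t).length (h :: t) le_rfl hc
  obtain ⟨h, pt, rfl⟩ := List.exists_cons_of_ne_nil hpne
  rw [List.cons_append, List.cons.injEq] at hsplit
  obtain ⟨rfl, rfl⟩ := hsplit
  have hσmem : σ ∈ (h :: (pt ++ σ :: s)).toFinset := by simp
  refine ⟨FreeSemigroup.mk h pt, σ, hσmem, ?_, ?_, ?_⟩
  · rw [content_mk]
    exact hpc
  · rw [content_mul, content_of, content_mk, hpc, Finset.union_comm,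
      ← Finset.insert_eq, Finset.insert_erase hσmem]
  · cases s with
    | nil =>
        have hw : FreeSemigroup.mk h (pt ++ σ :: ([] : List α)) =
            FreeSemigroup.mk h pt * FreeSemigroup.of σ := by
          rw [of_eq_mk, FreeSemigroup.mk_mul_mk]
        rw [hw, ← pi_mul, fb_idem]
    | cons sh st =>
        have hw : FreeSemigroup.mk h (pt ++ σ :: (sh :: st)) =
            FreeSemigroup.mk h pt * FreeSemigroup.of σ * FreeSemigroup.mk sh st := by
          rw [mul_assoc, of_mul_mk, FreeSemigroup.mk_mul_mk]
        rw [hw, pi_mul, pi_mul]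
        calc pi (FreeSemigroup.mk h pt) * pi (FreeSemigroup.of σ) *
              (pi (FreeSemigroup.mk h pt) * pi (FreeSemigroup.of σ) * pi (FreeSemigroup.mk sh st))
            = (pi (FreeSemigroup.mk h pt) * pi (FreeSemigroup.of σ)) *
              (pi (FreeSemigroup.mk h pt) * pi (FreeSemigroup.of σ)) *
              pi (FreeSemigroup.mk sh st) := by
              simp only [mul_assoc]
          _ = pi (FreeSemigroup.mk h pt) * pi (FreeSemigroup.of σ) *
              pi (FreeSemigroup.mk sh st) := by
              rw [fb_idem]

/-- Right decomposition: `w` is absorbed on the right by its terminal mark `τ·q`. -/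
theorem right_dec (w : FreeSemigroup α) (hc : 2 ≤ (content w).card) :
    ∃ (q : FreeSemigroup α) (τ : α), τ ∈ content w ∧
      content q = (content w).erase τ ∧
      content (FreeSemigroup.of τ * q) = content w ∧
      pi w * (pi (FreeSemigroup.of τ) * pi q) = pi w := by
  obtain ⟨h, t⟩ := w
  rw [content_mk] at hc ⊢
  obtain ⟨p', τ, s', hsplit, hτp, hpc, hpne⟩ :=
    list_dec (h :: t).reverse.length (h :: t).reverse le_rfl
      (by rw [List.toFinset_reverse]; exact hc)
  have hl : h :: t = s'.reverse ++ τ :: p'.reverse := by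
    have h2 := congrArg List.reverse hsplit
    rw [List.reverse_reverse, List.reverse_append, List.reverse_cons] at h2
    rw [h2, List.append_assoc]
    rfl
  have hqne : p'.reverse ≠ [] := fun hq => hpne (by
    have h3 := congrArg List.reverse hq
    rwa [List.reverse_reverse] at h3)
  obtain ⟨qh, qt, hq⟩ := List.exists_cons_of_ne_nil hqne
  have hqc : (qh :: qt).toFinset = (h :: t).toFinset.erase τ := by
    rw [← hq, List.toFinset_reverse, hpc, List.toFinset_reverse]
  have hτmem : τ ∈ (h :: t).toFinset := by
    rw [hl]
    simp
  refine ⟨FreeSemigroup.mk qh qt, τ, hτmem, ?_, ?_, ?_⟩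
  · rw [content_mk]
    exact hqc
  · rw [content_mul, content_of, content_mk, hqc, ← Finset.insert_eq,
      Finset.insert_erase hτmem]
  · rw [hq] at hl
    cases hs' : s'.reverse with
    | nil =>
        rw [hs', List.nil_append, List.cons.injEq] at hl
        obtain ⟨rfl, rfl⟩ := hl
        rw [show FreeSemigroup.mk h (qh :: qt) = FreeSemigroup.of h * FreeSemigroup.mk qh qt from
          (of_mul_mk h qh qt).symm, pi_mul, fb_idem]
    | cons th tt =>
        rw [hs', List.cons_append, List.cons.injEq] at hl
        obtain ⟨rfl, rfl⟩ := hl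
        have hw : FreeSemigroup.mk h (tt ++ τ :: (qh :: qt)) =
            FreeSemigroup.mk h tt * (FreeSemigroup.of τ * FreeSemigroup.mk qh qt) := by
          rw [of_mul_mk, FreeSemigroup.mk_mul_mk]
        rw [hw, pi_mul, pi_mul]
        calc pi (FreeSemigroup.mk h tt) *
              (pi (FreeSemigroup.of τ) * pi (FreeSemigroup.mk qh qt)) *
              (pi (FreeSemigroup.of τ) * pi (FreeSemigroup.mk qh qt))
            = pi (FreeSemigroup.mk h tt) *
              ((pi (FreeSemigroup.of τ) * pi (FreeSemigroup.mk qh qt)) *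
               (pi (FreeSemigroup.of τ) * pi (FreeSemigroup.mk qh qt))) := by
              simp only [mul_assoc]
          _ = pi (FreeSemigroup.mk h tt) *
              (pi (FreeSemigroup.of τ) * pi (FreeSemigroup.mk qh qt)) := by
              rw [fb_idem]

end WordDec

end GreenRees

namespace GreenRees

section Main

variable {α : Type*} [DecidableEq α]

/-- Green–Rees decomposition: every element of full content `C` (with `2 ≤ |C|`)
factors as `(p·σ)·(τ·q)` with `p`, `q` of content one smaller. -/
theorem main_dec (w : FreeSemigroup α) (hc : 2 ≤ (content w).card) :
    ∃ (p q : FreeSemigroup α) (σ τ : α), σ ∈ content w ∧ τ ∈ content w ∧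
      content p = (content w).erase σ ∧ content q = (content w).erase τ ∧
      pi w = pi p * pi (FreeSemigroup.of σ) * (pi (FreeSemigroup.of τ) * pi q) := by
  obtain ⟨p, σ, hσ, hpcon, hPcon, hP⟩ := left_dec w hc
  obtain ⟨q, τ, hτ, hqcon, hQcon, hQ⟩ := right_dec w hc
  refine ⟨p, q, σ, τ, hσ, hτ, hpcon, hqcon, ?_⟩
  set A := pi p * pi (FreeSemigroup.of σ) with hA
  set B := pi (FreeSemigroup.of τ) * pi q with hB
  set W := pi w with hW
  have hApi : A = pi (p * FreeSemigroup.of σ) := by rw [pi_mul]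
  have hBpi : B = pi (FreeSemigroup.of τ * q) := by rw [pi_mul]
  -- sandwich identities for the three equal-content words
  have h3 : B * W * B = B := by
    rw [hBpi]
    exact sandwich_eq (FreeSemigroup.of τ * q) w hQcon
  have h4 : A * B * A = A := by
    rw [hApi, hBpi]
    exact sandwich_eq (p * FreeSemigroup.of σ) (FreeSemigroup.of τ * q) (hPcon.trans hQcon.symm)
  have hAW : A * W = W := hP
  have hWB : W * B = W := hQ
  have hAWB : A * W * B = W := by rw [hAW, hWB]
  have step1 : A * B = A * B * W := by
    calc A * B = A * (B * W * B) := by rw [h3]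
      _ = A * B * (W * B) := by simp only [mul_assoc]
      _ = A * B * W := by rw [hWB]
  have final : A * B = W := by
    calc A * B = A * B * W := step1
      _ = A * B * (A * W * B) := by rw [hAWB]
      _ = A * B * A * (W * B) := by simp only [mul_assoc]
      _ = A * (W * B) := by rw [h4]
      _ = A * W := by rw [hWB]
      _ = W := hAW
  exact final.symm

end Main

end GreenRees

namespace GreenRees

section Finiteness

variable {α : Type*} [DecidableEq α]

/-- Words whose content is the singleton `{a}` project to the class of `a`. -/
theorem single_content (w : FreeSemigroup α) (a : α) (h : content w = {a}) :
    pi w = pi (FreeSemigroup.of a) := by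
  induction w using FreeSemigroup.recOnMul with
  | ih1 b =>
      rw [content_of] at h
      rw [Finset.singleton_inj.1 h]
  | ih2 b v ihb ihv =>
      rw [content_mul] at h
      have hb : content (FreeSemigroup.of b) = {a} := by
        have hsub : content (FreeSemigroup.of b) ⊆ {a} := h ▸ Finset.subset_union_left
        obtain h1 | h1 := Finset.subset_singleton_iff.1 hsub
        · exact absurd h1 (Finset.nonempty_iff_ne_empty.1 (content_nonempty _))
        · exact h1
      have hv : content v = {a} := by
        have hsub : content v ⊆ {a} := h ▸ Finset.subset_union_right
        obtain h1 | h1 := Finset.subset_singleton_iff.1 hsub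
        · exact absurd h1 (Finset.nonempty_iff_ne_empty.1 (content_nonempty _))
        · exact h1
      rw [pi_mul, ihb hb, ihv hv, fb_idem]

/-- The set of classes of words with content `C`. -/
def Sset (C : Finset α) : Set (FreeBand α) := {x | ∃ w, content w = C ∧ pi w = x}

theorem Sset_finite : ∀ (n : ℕ) (C : Finset α), C.card = n → (Sset C).Finite := by
  intro n
  induction n using Nat.strong_induction_on with
  | _ n ih =>
    intro C hC
    rcases Nat.lt_or_ge n 2 with h2 | h2
    · interval_cases n
      · have hC0 : C = ∅ := Finset.card_eq_zero.1 hC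
        refine Set.Finite.subset Set.finite_empty ?_
        rintro x ⟨w, hw, rfl⟩
        have : (∅ : Finset α).Nonempty := hC0 ▸ hw ▸ content_nonempty w
        simp at this
      · obtain ⟨a, rfl⟩ := Finset.card_eq_one.1 hC
        refine Set.Finite.subset (Set.finite_singleton (pi (FreeSemigroup.of a))) ?_
        rintro x ⟨w, hw, rfl⟩
        exact single_content w a hw
    · have hsub : Sset C ⊆ ⋃ σ ∈ C, ⋃ τ ∈ C,
          (fun y : FreeBand α × FreeBand α =>
            y.1 * pi (FreeSemigroup.of σ) * (pi (FreeSemigroup.of τ) * y.2)) ''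
            ((Sset (C.erase σ)) ×ˢ (Sset (C.erase τ))) := by
        rintro x ⟨w, hw, rfl⟩
        have hc2 : 2 ≤ (content w).card := by rw [hw, hC]; omega
        obtain ⟨p, q, σ, τ, hσ, hτ, hpc, hqc, heq⟩ := main_dec w hc2
        rw [hw] at hσ hτ hpc hqc
        refine Set.mem_biUnion hσ (Set.mem_biUnion hτ ?_)
        exact ⟨(pi p, pi q), ⟨⟨p, hpc, rfl⟩, ⟨q, hqc, rfl⟩⟩, heq.symm⟩
      refine Set.Finite.subset ?_ hsub
      refine Set.Finite.biUnion C.finite_toSet fun σ hσ => ?_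
      refine Set.Finite.biUnion C.finite_toSet fun τ hτ => ?_
      refine Set.Finite.image _ (Set.Finite.prod ?_ ?_)
      · exact ih (C.erase σ).card
          (by rw [Finset.card_erase_of_mem hσ, hC]; omega) _ rfl
      · exact ih (C.erase τ).card
          (by rw [Finset.card_erase_of_mem hτ, hC]; omega) _ rfl

end Finiteness

end GreenRees

namespace GreenRees

/-- Part 1 of Green–Rees: the free band on a finite type is finite. -/
theorem freeBand_finite (α : Type*) [Fintype α] : Finite (FreeBand α) := by
  classical
  have huniv : (Set.univ : Set (FreeBand α)).Finite := by
    have hsub : (Set.univ : Set (FreeBand α)) ⊆ ⋃ C : Finset α, Sset C := by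
      rintro x -
      obtain ⟨w, rfl⟩ := pi_surjective x
      exact Set.mem_iUnion.2 ⟨content w, w, rfl, rfl⟩
    exact Set.Finite.subset (Set.finite_iUnion fun C => Sset_finite C.card C rfl) hsub
  exact Set.finite_univ_iff.1 huniv

/-- Part 2 of Green–Rees: every finitely generated band is finite. -/
theorem band_finite (S : Type) [Semigroup S] (hS : ∀ x : S, x * x = x)
    (s : Finset S) (hgen : Subsemigroup.closure (s : Set S) = ⊤) : Finite S := by
  classical
  set β := {x // x ∈ s}
  let φ : FreeSemigroup β →ₙ* S := FreeSemigroup.lift Subtype.val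
  let kerCon : Con (FreeSemigroup β) :=
    { r := fun u v => φ u = φ v
      iseqv := ⟨fun _ => rfl, Eq.symm, Eq.trans⟩
      mul' := fun h1 h2 => by
        simp only [map_mul]
        rw [h1, h2] }
  have hle : bandCon β ≤ kerCon := by
    refine Con.conGen_le.2 fun u v huv => ?_
    show φ u = φ v
    rw [huv, map_mul, hS]
  let φbar : FreeBand β → S := fun x => Con.liftOn x (⇑φ) fun a b h => hle h
  have hbar_pi : ∀ w : FreeSemigroup β, φbar (pi w) = φ w := fun w =>
    Con.liftOn_coe _ _ _ w
  have hbar_mul : ∀ x y : FreeBand β, φbar (x * y) = φbar x * φbar y := by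
    intro x y
    refine Con.induction_on₂ x y fun u v => ?_
    show φbar ((u : FreeBand β) * (v : FreeBand β)) = _
    rw [← Con.coe_mul]
    show φbar (pi (u * v)) = φbar (pi u) * φbar (pi v)
    rw [hbar_pi, hbar_pi, hbar_pi, map_mul]
  have hsurj : Function.Surjective φbar := by
    intro x
    have hx : x ∈ Subsemigroup.closure (s : Set S) := hgen ▸ Subsemigroup.mem_top x
    refine Subsemigroup.closure_induction
      (p := fun y _ => ∃ z : FreeBand β, φbar z = y) ?_ ?_ hx
    · intro y hy
      refine ⟨pi (FreeSemigroup.of ⟨y, hy⟩), ?_⟩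
      rw [hbar_pi]
      exact FreeSemigroup.lift_of _ _
    · rintro y z _ _ ⟨u, hu⟩ ⟨v, hv⟩
      exact ⟨u * v, by rw [hbar_mul, hu, hv]⟩
  have : Finite (FreeBand β) := freeBand_finite β
  exact Finite.of_surjective φbar hsurj

end GreenRees

/-- Green–Rees theorem: the free band on a finite type is finite; equivalently,
every band (idempotent semigroup) generated, as a semigroup, by a finite subset
is finite. -/
theorem green_rees :
    (∀ (α : Type) [Fintype α], Finite (FreeBand α)) ∧
    (∀ (S : Type) [Semigroup S], (∀ x : S, x * x = x) →
      ∀ s : Finset S, Subsemigroup.closure (s : Set S) = ⊤ → Finite S) := by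
  exact ⟨fun α _ => GreenRees.freeBand_finite α,
    fun S _ hS s hgen => GreenRees.band_finite S hS s hgen⟩
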